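/- Let U ⊆ F(Z) be a vector space of real-valued functions with |U| ⊆ P(U). Then |P(U)| ⊆ P(P(U)); that is, for every f ∈ P(U), the absolute value |f| belongs to P(P(U)). -/
import Mathlib


open Filter Topology

/-- `Pdom M`: dominated pointwise limits of sequences in `M`
(sequence `f₀, f₁, …` with `|fₙ| ≤ f₀` for `n ≥ 1`, converging pointwise). -/
def Pdom {Z : Type*} (M : Set (Z → ℝ)) : Set (Z → ℝ) :=
  { f | ∃ F : ℕ → Z → ℝ, (∀ n, F n ∈ M) ∧ (∀ n, |F (n + 1)| ≤ F 0) ∧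
      ∀ z, Tendsto (fun n => F n z) atTop (𝓝 (f z)) }

/-- `U` is a vector subspace of the functions `Z → ℝ`. -/
def IsSubspace {Z : Type*} (U : Set (Z → ℝ)) : Prop :=
  (0 : Z → ℝ) ∈ U ∧ (∀ f g, f ∈ U → g ∈ U → f + g ∈ U) ∧
    ∀ (c : ℝ) (f), f ∈ U → c • f ∈ U

/-- A Riesz space of functions: a subspace closed under pointwise absolute value. -/
def IsRiesz {Z : Type*} (R : Set (Z → ℝ)) : Prop :=
  IsSubspace R ∧ ∀ f, f ∈ R → |f| ∈ R

/-- A Lebesgue lattice: a Riesz space closed under dominated pointwise limits. -/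
def IsLebesgue {Z : Type*} (L : Set (Z → ℝ)) : Prop :=
  IsRiesz L ∧ Pdom L ⊆ L

/-- smallest Riesz space containing `M`. -/
def RGen {Z : Type*} (M : Set (Z → ℝ)) : Set (Z → ℝ) :=
  ⋂₀ { R | IsRiesz R ∧ M ⊆ R }

/-- smallest Lebesgue lattice containing `M`. -/
def LGen {Z : Type*} (M : Set (Z → ℝ)) : Set (Z → ℝ) :=
  ⋂₀ { L | IsLebesgue L ∧ M ⊆ L }

/-- Daniell integral on `R`: additive, homogeneous, monotone, continuous under
decreasing convergence to `0`. -/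
def IsDaniell {Z : Type*} (R : Set (Z → ℝ)) (I : (Z → ℝ) → ℝ) : Prop :=
  IsRiesz R ∧
  (∀ f g, f ∈ R → g ∈ R → I (f + g) = I f + I g) ∧
  (∀ (c : ℝ) (f), f ∈ R → I (c • f) = c * I f) ∧
  (∀ f, f ∈ R → I f ≤ I |f|) ∧
  ∀ F : ℕ → Z → ℝ, (∀ n, F n ∈ R) → (∀ n, 0 ≤ F (n + 1)) →
    (∀ n, F (n + 1) ≤ F n) →
    (∀ z, Tendsto (fun n => F n z) atTop (𝓝 0)) →
    Tendsto (fun n => I (F n)) atTop (𝓝 0)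

/-- elementary tensor `(g ⊗ h)(x, y) = g x * h y`. -/
def tensor {X Y : Type*} (g : X → ℝ) (h : Y → ℝ) : X × Y → ℝ :=
  fun p => g p.1 * h p.2

/-- tensor product `V ⊗ W`: finite sums of elementary tensors. -/
def TensorSet {X Y : Type*} (V : Set (X → ℝ)) (W : Set (Y → ℝ)) :
    Set (X × Y → ℝ) :=
  { f | ∃ (k : ℕ) (g : Fin k → X → ℝ) (h : Fin k → Y → ℝ),
      (∀ i, g i ∈ V) ∧ (∀ i, h i ∈ W) ∧ f = ∑ i, tensor (g i) (h i) }

/-- `iterP U m`: `U₁ = U`, `U_{m+1} = P(U_m)` (0-indexed). -/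
def iterP {Z : Type*} (U : Set (Z → ℝ)) : ℕ → Set (Z → ℝ)
  | 0 => U
  | n + 1 => Pdom (iterP U n)

theorem stmt4 {Z : Type*} (U : Set (Z → ℝ)) (hU : IsSubspace U)
    (habs : ∀ f ∈ U, |f| ∈ Pdom U) :
    ∀ f ∈ Pdom U, |f| ∈ Pdom (Pdom U) := by
  rintro f ⟨F, hFU, hdom, hlim⟩
  have hF0 : ∀ z, 0 ≤ F 0 z := fun z => le_trans (abs_nonneg _) (hdom 0 z)
  refine ⟨fun n => if n = 0 then F 0 else |F n|, ?_, ?_, ?_⟩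
  · intro n
    cases n with
    | zero =>
      simp only [if_pos rfl]
      exact ⟨fun _ => F 0, fun _ => hFU 0,
        fun n z => le_of_eq (abs_of_nonneg (hF0 z)),
        fun z => tendsto_const_nhds⟩
    | succ n =>
      simp only [Nat.succ_ne_zero, if_false]
      exact habs _ (hFU (n + 1))
  · intro n z
    simp only [Nat.succ_ne_zero, if_false, if_pos rfl, Pi.abs_apply, abs_abs]
    exact hdom n z
  · intro z
    have h1 : Tendsto (fun n => |F n z|) atTop (𝓝 (|f| z)) := by
      rw [Pi.abs_apply]
      exact (continuous_abs.tendsto _).comp (hlim z)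
    refine h1.congr' ?_
    filter_upwards [eventually_ge_atTop 1] with n hn
    have : n ≠ 0 := by omega
    simp [this]
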